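/- arXiv:0706.3423 — 2 statements merged into one kernel-verified Lean document; each statement's English description precedes it below -/
import Mathlib

section
/- Let A, B, C be pairwise disjoint finite sets and let σ be a fixed-point-free involution of the union A ∪ B ∪ C such that for every element x of the union, x and σ(x) never lie in the same one of the three sets A, B, C (i.e., σ pairs each element with an element of a different set). Then the cardinalities N₁ = |A|, N₂ = |B|, N₃ = |C| satisfy the triangle inequalities N₁ ≤ N₂ + N₃, N₂ ≤ N₁ + N₃, N₃ ≤ N₁ + N₂, and moreover the total N₁ + N₂ + N₃ is even. -/
private lemma even_card_of_invol {α : Type*} [DecidableEq α] :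
    ∀ n (s : Finset α), s.card = n → ∀ σ : α → α,
      (∀ x ∈ s, σ x ∈ s) → (∀ x ∈ s, σ (σ x) = x) → (∀ x ∈ s, σ x ≠ x) →
      Even s.card := by
  intro n
  induction n using Nat.strong_induction_on with
  | _ n ih =>
    intro s hcard σ hmaps hinv hfpf
    rcases s.eq_empty_or_nonempty with rfl | ⟨x, hx⟩
    · simp
    · have hσx : σ x ∈ s := hmaps x hx
      have hne : σ x ≠ x := hfpf x hx
      set t := s \ {x, σ x} with ht
      have hsub : t ⊆ s := Finset.sdiff_subset
      have hcardt : t.card + 2 = s.card := by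
        have : ({x, σ x} : Finset α) ⊆ s := by
          intro y hy; simp at hy; rcases hy with rfl | rfl <;> assumption
        have h2le : 2 ≤ s.card := by
          rw [← Finset.card_pair hne.symm]; exact Finset.card_le_card this
        rw [ht, Finset.card_sdiff_of_subset this, Finset.card_pair hne.symm]
        omega
      have htmaps : ∀ y ∈ t, σ y ∈ t := by
        intro y hy
        have hys : y ∈ s := hsub hy
        have hynx : y ≠ x ∧ y ≠ σ x := by
          have := hy; rw [ht] at this; simp at this; tauto
        rw [ht]; simp only [Finset.mem_sdiff, Finset.mem_insert, Finset.mem_singleton]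
        refine ⟨hmaps y hys, ?_⟩
        push_neg
        constructor
        · intro h; exact hynx.2 (by rw [← hinv y hys, h])
        · intro h
          have : σ (σ y) = σ (σ x) := by rw [h]
          rw [hinv y hys, hinv x hx] at this
          exact hynx.1 this
      have ht2 : Even t.card := ih t.card (by omega) t rfl σ htmaps
        (fun y hy => hinv y (hsub hy)) (fun y hy => hfpf y (hsub hy))
      obtain ⟨k, hk⟩ := ht2
      exact ⟨k + 1, by omega⟩

/-- If `A`, `B`, `C` are pairwise disjoint finite sets and `σ` is a fixed-point-free
involution of `A ∪ B ∪ C` that always pairs an element of one of the three sets with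
an element of a *different* one of the three sets, then the cardinalities satisfy the
triangle inequalities and their sum is even. -/
theorem stmt0 {α : Type*} [DecidableEq α] (A B C : Finset α)
    (hAB : Disjoint A B) (hAC : Disjoint A C) (hBC : Disjoint B C)
    (σ : α → α)
    (hmaps : ∀ x ∈ A ∪ B ∪ C, σ x ∈ A ∪ B ∪ C)
    (hinv : ∀ x ∈ A ∪ B ∪ C, σ (σ x) = x)
    (hfpf : ∀ x ∈ A ∪ B ∪ C, σ x ≠ x)
    (hdiff : ∀ x ∈ A ∪ B ∪ C,
      ¬(x ∈ A ∧ σ x ∈ A) ∧ ¬(x ∈ B ∧ σ x ∈ B) ∧ ¬(x ∈ C ∧ σ x ∈ C)) :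
    A.card ≤ B.card + C.card ∧ B.card ≤ A.card + C.card ∧
      C.card ≤ A.card + B.card ∧ Even (A.card + B.card + C.card) := by
  have hmemU : ∀ x, x ∈ A ∪ B ∪ C ↔ (x ∈ A ∨ x ∈ B ∨ x ∈ C) := by
    intro x; simp [Finset.mem_union, or_assoc]
  have hinj : ∀ X : Finset α, X ⊆ A ∪ B ∪ C → Set.InjOn σ X := by
    intro X hX y hy z hz h
    have := hinv y (hX hy)
    rw [← this, h, hinv z (hX hz)]
  -- each set maps injectively into the union of the other two
  have key : ∀ (X Y Z : Finset α), X ⊆ A ∪ B ∪ C →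
      (∀ x ∈ X, σ x ∈ Y ∪ Z) → X.card ≤ Y.card + Z.card := by
    intro X Y Z hX hmap
    calc X.card ≤ (Y ∪ Z).card :=
          Finset.card_le_card_of_injOn σ hmap (hinj X hX)
      _ ≤ Y.card + Z.card := Finset.card_union_le Y Z
  have hA : A ⊆ A ∪ B ∪ C := by intro x hx; simp [hx]
  have hB : B ⊆ A ∪ B ∪ C := by intro x hx; simp [hx]
  have hC : C ⊆ A ∪ B ∪ C := by intro x hx; simp [hx]
  have h1 : A.card ≤ B.card + C.card := by
    refine key A B C hA ?_
    intro x hx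
    have hxu := hA hx
    have := hdiff x hxu
    have hs := hmaps x hxu
    rw [hmemU] at hs
    rcases hs with h | h | h
    · exact absurd ⟨hx, h⟩ this.1
    · simp [h]
    · simp [h]
  have h2 : B.card ≤ A.card + C.card := by
    refine key B A C hB ?_
    intro x hx
    have hxu := hB hx
    have := hdiff x hxu
    have hs := hmaps x hxu
    rw [hmemU] at hs
    rcases hs with h | h | h
    · simp [h]
    · exact absurd ⟨hx, h⟩ this.2.1
    · simp [h]
  have h3 : C.card ≤ A.card + B.card := by
    refine key C A B hC ?_
    intro x hx
    have hxu := hC hx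
    have := hdiff x hxu
    have hs := hmaps x hxu
    rw [hmemU] at hs
    rcases hs with h | h | h
    · simp [h]
    · simp [h]
    · exact absurd ⟨hx, h⟩ this.2.2
  have heven : Even ((A ∪ B ∪ C).card) :=
    even_card_of_invol (A ∪ B ∪ C).card _ rfl σ hmaps hinv hfpf
  have hcard : (A ∪ B ∪ C).card = A.card + B.card + C.card := by
    rw [Finset.card_union_of_disjoint, Finset.card_union_of_disjoint hAB]
    · exact Finset.disjoint_union_left.mpr ⟨hAC, hBC⟩
  exact ⟨h1, h2, h3, hcard ▸ heven⟩
end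

section
/- Let A, B, C be pairwise disjoint finite sets whose cardinalities N₁ = |A|, N₂ = |B|, N₃ = |C| satisfy the triangle inequalities N₁ ≤ N₂ + N₃, N₂ ≤ N₁ + N₃, N₃ ≤ N₁ + N₂ and have even sum N₁ + N₂ + N₃. Then there exists a fixed-point-free involution σ of A ∪ B ∪ C such that for every element x, the elements x and σ(x) lie in different sets among A, B, C. -/
def Qprop {α : Type*} [DecidableEq α] (A B C : Finset α) : Prop :=
  ∃ σ : α → α,
      (∀ x ∈ A ∪ B ∪ C, σ x ∈ A ∪ B ∪ C) ∧
      (∀ x ∈ A ∪ B ∪ C, σ (σ x) = x) ∧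
      (∀ x ∈ A ∪ B ∪ C, σ x ≠ x) ∧
      (∀ x ∈ A ∪ B ∪ C,
        ¬(x ∈ A ∧ σ x ∈ A) ∧ ¬(x ∈ B ∧ σ x ∈ B) ∧ ¬(x ∈ C ∧ σ x ∈ C))

lemma Qswap12 {α : Type*} [DecidableEq α] {A B C : Finset α} (h : Qprop A B C) :
    Qprop B A C := by
  obtain ⟨σ, h1, h2, h3, h4⟩ := h
  have hU : ∀ x : α, x ∈ B ∪ A ∪ C ↔ x ∈ A ∪ B ∪ C := by
    intro x; simp only [Finset.mem_union]; tauto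
  refine ⟨σ, ?_, ?_, ?_, ?_⟩
  · intro x hx; exact (hU _).mpr (h1 x ((hU x).mp hx))
  · intro x hx; exact h2 x ((hU x).mp hx)
  · intro x hx; exact h3 x ((hU x).mp hx)
  · intro x hx
    obtain ⟨p, q, r⟩ := h4 x ((hU x).mp hx)
    exact ⟨q, p, r⟩

lemma Qswap23 {α : Type*} [DecidableEq α] {A B C : Finset α} (h : Qprop A B C) :
    Qprop A C B := by
  obtain ⟨σ, h1, h2, h3, h4⟩ := h
  have hU : ∀ x : α, x ∈ A ∪ C ∪ B ↔ x ∈ A ∪ B ∪ C := by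
    intro x; simp only [Finset.mem_union]; tauto
  refine ⟨σ, ?_, ?_, ?_, ?_⟩
  · intro x hx; exact (hU _).mpr (h1 x ((hU x).mp hx))
  · intro x hx; exact h2 x ((hU x).mp hx)
  · intro x hx; exact h3 x ((hU x).mp hx)
  · intro x hx
    obtain ⟨p, q, r⟩ := h4 x ((hU x).mp hx)
    exact ⟨p, r, q⟩

lemma Qstep {α : Type*} [DecidableEq α] (A B C : Finset α) (a b : α)
    (ha : a ∈ A) (hb : b ∈ B)
    (hAB : Disjoint A B) (hAC : Disjoint A C) (hBC : Disjoint B C)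
    (h : Qprop (A.erase a) (B.erase b) C) : Qprop A B C := by
  obtain ⟨σ, hmap, hinv, hne, hdiff⟩ := h
  have haB : a ∉ B := Finset.disjoint_left.mp hAB ha
  have haC : a ∉ C := Finset.disjoint_left.mp hAC ha
  have hbA : b ∉ A := Finset.disjoint_right.mp hAB hb
  have hbC : b ∉ C := Finset.disjoint_left.mp hBC hb
  have hab : a ≠ b := fun h => haB (h ▸ hb)
  have haU : a ∉ A.erase a ∪ B.erase b ∪ C := by
    simp [Finset.mem_union, Finset.mem_erase, haB, haC]
  have hbU : b ∉ A.erase a ∪ B.erase b ∪ C := by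
    simp [Finset.mem_union, Finset.mem_erase, hbA, hbC]
  have hmemU : ∀ x : α, x ∈ A ∪ B ∪ C ↔
      x = a ∨ x = b ∨ x ∈ A.erase a ∪ B.erase b ∪ C := by
    intro x
    by_cases h1 : x = a
    · subst h1; simp [ha]
    by_cases h2 : x = b
    · subst h2; simp [hb]
    simp [Finset.mem_union, Finset.mem_erase, h1, h2]
  refine ⟨fun x => if x = a then b else if x = b then a else σ x, ?_, ?_, ?_, ?_⟩
  · intro x hx
    rcases (hmemU x).mp hx with h1 | h1 | h1
    · subst h1; simp [hab]; simp [Finset.mem_union, hb]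
    · subst h1; simp [hab.symm]; simp [Finset.mem_union, ha]
    · have hx1 : x ≠ a := fun e => haU (e ▸ h1)
      have hx2 : x ≠ b := fun e => hbU (e ▸ h1)
      simp only [hx1, hx2, if_false]
      exact (hmemU _).mpr (Or.inr (Or.inr (hmap x h1)))
  · intro x hx
    rcases (hmemU x).mp hx with h1 | h1 | h1
    · subst h1; simp [hab, hab.symm]
    · subst h1; simp [hab, hab.symm]
    · have hx1 : x ≠ a := fun e => haU (e ▸ h1)
      have hx2 : x ≠ b := fun e => hbU (e ▸ h1)
      have hσ : σ x ∈ A.erase a ∪ B.erase b ∪ C := hmap x h1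
      have hσ1 : σ x ≠ a := fun e => haU (e ▸ hσ)
      have hσ2 : σ x ≠ b := fun e => hbU (e ▸ hσ)
      simp only [hx1, hx2, hσ1, hσ2, if_false]
      exact hinv x h1
  · intro x hx
    rcases (hmemU x).mp hx with h1 | h1 | h1
    · subst h1; simp [hab, hab.symm]
    · subst h1; simp [hab, hab.symm]
    · have hx1 : x ≠ a := fun e => haU (e ▸ h1)
      have hx2 : x ≠ b := fun e => hbU (e ▸ h1)
      simp only [hx1, hx2, if_false]
      exact hne x h1
  · intro x hx
    rcases (hmemU x).mp hx with h1 | h1 | h1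
    · subst h1
      simp only [if_pos rfl]
      exact ⟨fun h => hbA h.2, fun h => haB h.1, fun h => haC h.1⟩
    · subst h1
      simp only [hab.symm, if_false, if_pos rfl, if_neg hab.symm]
      exact ⟨fun h => hbA h.1, fun h => haB h.2, fun h => hbC h.1⟩
    · have hx1 : x ≠ a := fun e => haU (e ▸ h1)
      have hx2 : x ≠ b := fun e => hbU (e ▸ h1)
      simp only [hx1, hx2, if_false]
      have hσ : σ x ∈ A.erase a ∪ B.erase b ∪ C := hmap x h1
      have hσ1 : σ x ≠ a := fun e => haU (e ▸ hσ)
      have hσ2 : σ x ≠ b := fun e => hbU (e ▸ hσ)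
      obtain ⟨p, q, r⟩ := hdiff x h1
      refine ⟨fun h => p ⟨Finset.mem_erase.mpr ⟨hx1, h.1⟩,
        Finset.mem_erase.mpr ⟨hσ1, h.2⟩⟩,
        fun h => q ⟨Finset.mem_erase.mpr ⟨hx2, h.1⟩,
        Finset.mem_erase.mpr ⟨hσ2, h.2⟩⟩, r⟩

lemma Qkey {α : Type*} [DecidableEq α] :
    ∀ n : ℕ, ∀ A B C : Finset α,
      Disjoint A B → Disjoint A C → Disjoint B C →
      A.card ≤ B.card + C.card → B.card ≤ A.card + C.card →
      C.card ≤ A.card + B.card → Even (A.card + B.card + C.card) →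
      A.card + B.card + C.card = n → Qprop A B C := by
  intro n
  induction n using Nat.strong_induction_on with
  | _ n ih =>
    intro A B C hAB hAC hBC h₁ h₂ h₃ heven hn
    rw [Nat.even_iff] at heven
    rcases Nat.eq_zero_or_pos n with h0 | hpos
    · subst h0
      have hA : A = ∅ := Finset.card_eq_zero.mp (by omega)
      have hB : B = ∅ := Finset.card_eq_zero.mp (by omega)
      have hC : C = ∅ := Finset.card_eq_zero.mp (by omega)
      subst hA; subst hB; subst hC
      exact ⟨id, by simp, by simp, by simp, by simp⟩
    have main : ∀ A B C : Finset α,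
        Disjoint A B → Disjoint A C → Disjoint B C →
        A.card ≤ B.card + C.card → B.card ≤ A.card + C.card →
        C.card ≤ A.card + B.card →
        (A.card + B.card + C.card) % 2 = 0 →
        A.card + B.card + C.card = n →
        C.card ≤ A.card → C.card ≤ B.card → Qprop A B C := by
      intro A B C hAB hAC hBC h₁ h₂ h₃ heven hn hCA hCB
      have hA1 : 1 ≤ A.card := by omega
      have hB1 : 1 ≤ B.card := by omega
      obtain ⟨a, ha⟩ := Finset.card_pos.mp (by omega : 0 < A.card)
      obtain ⟨b, hb⟩ := Finset.card_pos.mp (by omega : 0 < B.card)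
      refine Qstep A B C a b ha hb hAB hAC hBC ?_
      have cA : (A.erase a).card = A.card - 1 := Finset.card_erase_of_mem ha
      have cB : (B.erase b).card = B.card - 1 := Finset.card_erase_of_mem hb
      refine ih (n - 2) (by omega) _ _ _
        (hAB.mono (Finset.erase_subset _ _) (Finset.erase_subset _ _))
        (hAC.mono_left (Finset.erase_subset _ _))
        (hBC.mono_left (Finset.erase_subset _ _))
        (by omega) (by omega) (by omega)
        (by rw [Nat.even_iff]; omega) (by omega)
    by_cases hc : C.card ≤ A.card ∧ C.card ≤ B.card
    · exact main A B C hAB hAC hBC h₁ h₂ h₃ heven hn hc.1 hc.2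
    by_cases hbs : B.card ≤ A.card ∧ B.card ≤ C.card
    · refine Qswap23 (main A C B hAC hAB hBC.symm ?_ ?_ ?_ ?_ ?_ hbs.1 hbs.2) <;> omega
    · have hA1 : A.card ≤ B.card := by omega
      have hA2 : A.card ≤ C.card := by omega
      exact Qswap23 (Qswap12 (Qswap23 (Qswap12
        (main B C A hBC hAB.symm hAC.symm (by omega) (by omega) (by omega)
          (by omega) (by omega) hA1 hA2))))

/-- If the cardinalities of three pairwise disjoint finite sets satisfy the triangle
inequalities and have even sum, then there is a fixed-point-free involution of the
union pairing each element with an element of a different one of the three sets. -/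
theorem stmt4 {α : Type*} [DecidableEq α] (A B C : Finset α)
    (hAB : Disjoint A B) (hAC : Disjoint A C) (hBC : Disjoint B C)
    (h₁ : A.card ≤ B.card + C.card) (h₂ : B.card ≤ A.card + C.card)
    (h₃ : C.card ≤ A.card + B.card)
    (heven : Even (A.card + B.card + C.card)) :
    ∃ σ : α → α,
      (∀ x ∈ A ∪ B ∪ C, σ x ∈ A ∪ B ∪ C) ∧
      (∀ x ∈ A ∪ B ∪ C, σ (σ x) = x) ∧
      (∀ x ∈ A ∪ B ∪ C, σ x ≠ x) ∧
      (∀ x ∈ A ∪ B ∪ C,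
        ¬(x ∈ A ∧ σ x ∈ A) ∧ ¬(x ∈ B ∧ σ x ∈ B) ∧ ¬(x ∈ C ∧ σ x ∈ C)) := by
  exact Qkey _ A B C hAB hAC hBC h₁ h₂ h₃ heven rfl
end
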